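/- Let X ~ N(0,1), N ~ N(0,σ_N²) independent with σ_N > 0, and Y = X + N. The estimator X̂₀ = Y/√(1+σ_N²) satisfies: (i) X̂₀ ~ N(0,1), i.e. it has the same distribution as X (perfect perceptual index); and (ii) E[(X − X̂₀)²] = 2(1 − 1/√(1+σ_N²)), which is strictly smaller than twice the MMSE 2σ_N²/(1+σ_N²). -/

import Mathlib

open MeasureTheory ProbabilityTheory Real Set
open scoped NNReal ENNReal

namespace OPPEAux

lemma gauss_conv {v₁ v₂ : ℝ≥0} (h₁ : v₁ ≠ 0) (h₂ : v₂ ≠ 0) (u : ℝ) :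
    ∫ y : ℝ, gaussianPDFReal 0 v₁ (u - y) * gaussianPDFReal 0 v₂ y
      = gaussianPDFReal 0 (v₁ + v₂) u := by
  have ha : 0 < ((v₁ : ℝ)) := by exact_mod_cast pos_iff_ne_zero.2 h₁
  have hb : 0 < ((v₂ : ℝ)) := by exact_mod_cast pos_iff_ne_zero.2 h₂
  set a : ℝ := (v₁ : ℝ)
  set b : ℝ := (v₂ : ℝ)
  set b0 : ℝ := (a + b) / (2 * a * b) with hb0def
  have hb0 : 0 < b0 := by positivity
  set c : ℝ := b * u / (a + b) with hcdef
  set K : ℝ := (Real.sqrt (2 * π * a))⁻¹ * (Real.sqrt (2 * π * b))⁻¹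
      * Real.exp (-u ^ 2 / (2 * (a + b))) with hKdef
  have hexp : ∀ y : ℝ, -(u - y) ^ 2 / (2 * a) + -y ^ 2 / (2 * b)
      = -u ^ 2 / (2 * (a + b)) + -b0 * (y - c) ^ 2 := by
    intro y
    rw [hb0def, hcdef]
    field_simp
    ring
  have hpt : ∀ y : ℝ, gaussianPDFReal 0 v₁ (u - y) * gaussianPDFReal 0 v₂ y
      = K * Real.exp (-b0 * (y - c) ^ 2) := by
    intro y
    unfold gaussianPDFReal
    rw [sub_zero, sub_zero, mul_mul_mul_comm, ← Real.exp_add, hexp y, Real.exp_add, hKdef]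
    ring
  rw [integral_congr_ae (Filter.Eventually.of_forall hpt), integral_const_mul,
    integral_sub_right_eq_self (fun y => Real.exp (-b0 * y ^ 2)) c, integral_gaussian]
  have hS : (Real.sqrt (2 * π * a))⁻¹ * (Real.sqrt (2 * π * b))⁻¹ * Real.sqrt (π / b0)
      = (Real.sqrt (2 * π * (a + b)))⁻¹ := by
    rw [← Real.sqrt_inv, ← Real.sqrt_inv, ← Real.sqrt_inv,
      ← Real.sqrt_mul (by positivity), ← Real.sqrt_mul (by positivity)]
    congr 1
    rw [hb0def]
    field_simp
  unfold gaussianPDFReal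
  rw [sub_zero]
  push_cast
  rw [hKdef, ← hS]
  ring

lemma gaussianPDFReal_le {v : ℝ≥0} (x : ℝ) :
    gaussianPDFReal 0 v x ≤ (Real.sqrt (2 * π * v))⁻¹ := by
  unfold gaussianPDFReal
  calc (Real.sqrt (2 * π * v))⁻¹ * rexp (-(x - 0) ^ 2 / (2 * v))
      ≤ (Real.sqrt (2 * π * v))⁻¹ * 1 := by
        refine mul_le_mul_of_nonneg_left ?_ (by positivity)
        rw [Real.exp_le_one_iff]
        have h2v : (0:ℝ) ≤ 2 * v := by positivity
        exact div_nonpos_of_nonpos_of_nonneg (neg_nonpos.2 (sq_nonneg _)) h2v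
    _ = _ := mul_one _

lemma inner1 {v₂ : ℝ≥0} {s : Set ℝ} (hs : MeasurableSet s) (x : ℝ) :
    (volume.withDensity (gaussianPDF 0 v₂))
        (Prod.mk x ⁻¹' ((fun p : ℝ × ℝ => p.1 + p.2) ⁻¹' s))
      = ∫⁻ z, s.indicator (fun _ => (1:ℝ≥0∞)) z * gaussianPDF 0 v₂ (z - x) := by
  set F : ℝ → ℝ≥0∞ := s.indicator (fun _ => 1) with hF
  have hFmeas : Measurable F := measurable_one.indicator hs
  have hpre : (Prod.mk x ⁻¹' ((fun p : ℝ × ℝ => p.1 + p.2) ⁻¹' s)) = (fun y => x + y) ⁻¹' s := rfl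
  have hsx : MeasurableSet ((fun y => x + y) ⁻¹' s) := hs.preimage (measurable_const_add x)
  rw [hpre, withDensity_apply _ hsx, ← lintegral_indicator hsx]
  have hg : Measurable (fun z => F z * gaussianPDF 0 v₂ (z - x)) :=
    hFmeas.mul ((measurable_gaussianPDF 0 v₂).comp (measurable_id.sub measurable_const))
  have key := (measurePreserving_add_left volume x).lintegral_comp hg
  rw [← key]
  congr 1
  ext y
  simp only [indicator, mem_preimage, hF, add_sub_cancel_left]
  by_cases h : x + y ∈ s <;> simp [h]

lemma gauss_map_add {v₁ v₂ : ℝ≥0} (h₁ : v₁ ≠ 0) (h₂ : v₂ ≠ 0) :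
    Measure.map (fun p : ℝ × ℝ => p.1 + p.2)
      ((gaussianReal 0 v₁).prod (gaussianReal 0 v₂)) = gaussianReal 0 (v₁ + v₂) := by
  have h12 : v₁ + v₂ ≠ 0 := by simp [h₁]
  have hconv : ∀ z : ℝ, ∫⁻ x, gaussianPDF 0 v₂ (z - x) * gaussianPDF 0 v₁ x
      = gaussianPDF 0 (v₁ + v₂) z := by
    intro z
    have hint : Integrable (fun x => gaussianPDFReal 0 v₂ (z - x) * gaussianPDFReal 0 v₁ x) := by
      refine (integrable_gaussianPDFReal 0 v₁).bdd_mul (c := (Real.sqrt (2 * π * v₂))⁻¹) ?_ ?_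
      · exact ((measurable_gaussianPDFReal 0 v₂).comp
          (measurable_const.sub measurable_id)).aestronglyMeasurable
      · refine Filter.Eventually.of_forall fun x => ?_
        rw [Real.norm_eq_abs, abs_of_nonneg (gaussianPDFReal_nonneg _ _ _)]
        exact gaussianPDFReal_le _
    have h0 : ∀ x : ℝ, gaussianPDF 0 v₂ (z - x) * gaussianPDF 0 v₁ x
        = ENNReal.ofReal (gaussianPDFReal 0 v₂ (z - x) * gaussianPDFReal 0 v₁ x) := by
      intro x
      rw [ENNReal.ofReal_mul (gaussianPDFReal_nonneg _ _ _)]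
      rfl
    simp_rw [h0]
    rw [← ofReal_integral_eq_lintegral_ofReal hint
        (Filter.Eventually.of_forall fun x =>
          mul_nonneg (gaussianPDFReal_nonneg _ _ _) (gaussianPDFReal_nonneg _ _ _)),
      gauss_conv h₂ h₁ z, add_comm v₂ v₁]
    rfl
  ext s hs
  rw [Measure.map_apply measurable_add hs,
    gaussianReal_of_var_ne_zero 0 h₁, gaussianReal_of_var_ne_zero 0 h₂,
    gaussianReal_of_var_ne_zero 0 h12, withDensity_apply _ hs,
    Measure.prod_apply (measurable_add hs)]
  set F : ℝ → ℝ≥0∞ := s.indicator (fun _ => 1) with hF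
  have hFmeas : Measurable F := measurable_one.indicator hs
  calc ∫⁻ x, (volume.withDensity (gaussianPDF 0 v₂))
        (Prod.mk x ⁻¹' ((fun p : ℝ × ℝ => p.1 + p.2) ⁻¹' s))
        ∂(volume.withDensity (gaussianPDF 0 v₁))
      = ∫⁻ x, (∫⁻ z, F z * gaussianPDF 0 v₂ (z - x)) ∂(volume.withDensity (gaussianPDF 0 v₁)) := by
        congr 1; ext x; exact inner1 hs x
    _ = ∫⁻ x, gaussianPDF 0 v₁ x * (∫⁻ z, F z * gaussianPDF 0 v₂ (z - x)) := by
        have hmeasg : Measurable fun x : ℝ => ∫⁻ z, F z * gaussianPDF 0 v₂ (z - x) :=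
          Measurable.lintegral_prod_right (f := fun x z => F z * gaussianPDF 0 v₂ (z - x))
            ((hFmeas.comp measurable_snd).mul
              ((measurable_gaussianPDF 0 v₂).comp (measurable_snd.sub measurable_fst)))
        rw [lintegral_withDensity_eq_lintegral_mul _ (measurable_gaussianPDF 0 v₁) hmeasg]
        rfl
    _ = ∫⁻ x, ∫⁻ z, gaussianPDF 0 v₁ x * (F z * gaussianPDF 0 v₂ (z - x)) := by
        congr 1; ext x; rw [lintegral_const_mul]
        exact hFmeas.mul ((measurable_gaussianPDF 0 v₂).comp (measurable_id.sub measurable_const))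
    _ = ∫⁻ z, ∫⁻ x, gaussianPDF 0 v₁ x * (F z * gaussianPDF 0 v₂ (z - x)) := by
        apply lintegral_lintegral_swap
        exact ((measurable_gaussianPDF 0 v₁).comp measurable_fst |>.mul
          ((hFmeas.comp measurable_snd).mul
            ((measurable_gaussianPDF 0 v₂).comp (measurable_snd.sub measurable_fst)))).aemeasurable
    _ = ∫⁻ z, F z * ∫⁻ x, gaussianPDF 0 v₂ (z - x) * gaussianPDF 0 v₁ x := by
        congr 1; ext z
        rw [← lintegral_const_mul (F z)
          (f := fun x => gaussianPDF 0 v₂ (z - x) * gaussianPDF 0 v₁ x)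
          (((measurable_gaussianPDF 0 v₂).comp
            (measurable_const.sub measurable_id)).mul (measurable_gaussianPDF 0 v₁))]
        congr 1; ext x; ring
    _ = ∫⁻ z, F z * gaussianPDF 0 (v₁ + v₂) z := by simp_rw [hconv]
    _ = ∫⁻ z in s, gaussianPDF 0 (v₁ + v₂) z := by
        rw [← lintegral_indicator hs]
        congr 1; ext z
        simp only [indicator, hF]
        by_cases h : z ∈ s <;> simp [h]

lemma rpow_two_eq (x : ℝ) : x ^ (2:ℝ) = x ^ 2 := by
  rw [show (2:ℝ) = ((2:ℕ):ℝ) by norm_num, Real.rpow_natCast]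

lemma int_Ioi_sq_exp {b : ℝ} (hb : 0 < b) :
    ∫ x in Ioi (0:ℝ), x ^ 2 * rexp (-b * x ^ 2) = b ^ (-(3:ℝ)/2) * (Real.sqrt π / 4) := by
  have h := integral_rpow_mul_exp_neg_mul_rpow (p := 2) (q := 2) (b := b)
    two_pos (by norm_num) hb
  simp_rw [rpow_two_eq] at h
  rw [h, show ((2:ℝ)+1)/2 = 1/2 + 1 by norm_num,
    Real.Gamma_add_one (by norm_num), Real.Gamma_one_half_eq]
  rw [show -((2:ℝ)+1)/2 = -(3:ℝ)/2 by norm_num]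
  ring

lemma int_sq_exp {b : ℝ} (hb : 0 < b) :
    ∫ x : ℝ, x ^ 2 * rexp (-b * x ^ 2) = b ^ (-(3:ℝ)/2) * (Real.sqrt π / 2) := by
  have h := integral_comp_abs (f := fun t : ℝ => t ^ 2 * rexp (-b * t ^ 2))
  simp only [sq_abs] at h
  rw [h, int_Ioi_sq_exp hb]
  ring

lemma int_odd_exp (b : ℝ) : ∫ x : ℝ, x * rexp (-b * x ^ 2) = 0 := by
  have h := integral_neg_eq_self (fun x : ℝ => x * rexp (-b * x ^ 2)) volume
  simp only [neg_sq, neg_mul] at h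
  rw [integral_neg] at h
  simp only [neg_mul] at h ⊢
  linarith


lemma gauss_integral_eq {v : ℝ≥0} (hv : v ≠ 0) (g : ℝ → ℝ) :
    ∫ x, g x ∂(gaussianReal 0 v) = ∫ x, gaussianPDFReal 0 v x * g x := by
  rw [gaussianReal_of_var_ne_zero 0 hv]
  have h0 : gaussianPDF 0 v
      = fun x => ((fun y => (gaussianPDFReal 0 v y).toNNReal) x : ℝ≥0∞) := rfl
  rw [h0, integral_withDensity_eq_integral_smul
    ((measurable_gaussianPDFReal 0 v).real_toNNReal) g]
  congr 1
  ext x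
  rw [NNReal.smul_def, Real.coe_toNNReal _ (gaussianPDFReal_nonneg _ _ _), smul_eq_mul]

lemma gauss_integrable_iff {v : ℝ≥0} (hv : v ≠ 0) (g : ℝ → ℝ) :
    Integrable g (gaussianReal 0 v) ↔ Integrable (fun x => gaussianPDFReal 0 v x * g x) := by
  rw [gaussianReal_of_var_ne_zero 0 hv]
  have h0 : gaussianPDF 0 v
      = fun x => ((fun y => (gaussianPDFReal 0 v y).toNNReal) x : ℝ≥0∞) := rfl
  rw [h0, integrable_withDensity_iff_integrable_smul
    ((measurable_gaussianPDFReal 0 v).real_toNNReal)]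
  exact integrable_congr (Filter.Eventually.of_forall fun x => by
    simp only [NNReal.smul_def, smul_eq_mul,
      Real.coe_toNNReal _ (gaussianPDFReal_nonneg _ _ _)])

lemma gauss_pdf_mul (v : ℝ≥0) (g : ℝ → ℝ) (x : ℝ) :
    gaussianPDFReal 0 v x * g x
      = (Real.sqrt (2 * π * v))⁻¹ * (g x * rexp (-(2 * (v:ℝ))⁻¹ * x ^ 2)) := by
  unfold gaussianPDFReal
  rw [sub_zero, show -x ^ 2 / (2 * (v:ℝ)) = -(2 * (v:ℝ))⁻¹ * x ^ 2 by
    rw [div_eq_mul_inv]; ring]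
  ring

lemma gauss_moment2 {v : ℝ≥0} (hv : v ≠ 0) :
    ∫ x, x ^ 2 ∂(gaussianReal 0 v) = v := by
  have hvp : 0 < (v:ℝ) := by exact_mod_cast pos_iff_ne_zero.2 hv
  rw [gauss_integral_eq hv]
  simp_rw [gauss_pdf_mul v (fun x => x ^ 2)]
  rw [integral_const_mul, int_sq_exp (by positivity)]
  have h1 : ((2 * (v:ℝ))⁻¹) ^ (-(3:ℝ)/2) = (2 * (v:ℝ)) ^ ((3:ℝ)/2) := by
    rw [Real.inv_rpow (by positivity), ← Real.rpow_neg (by positivity)]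
    norm_num
  rw [h1, show (3:ℝ)/2 = 1 + 1/2 by norm_num, Real.rpow_add (by positivity),
    Real.rpow_one, ← Real.sqrt_eq_rpow]
  have h2 : Real.sqrt (2 * π * v) = Real.sqrt (2 * (v:ℝ)) * Real.sqrt π := by
    rw [← Real.sqrt_mul (by positivity)]
    congr 1
    ring
  rw [h2]
  have hs2v : 0 < Real.sqrt (2 * (v:ℝ)) := Real.sqrt_pos.2 (by positivity)
  have hspi : 0 < Real.sqrt π := Real.sqrt_pos.2 pi_pos
  field_simp


lemma gauss_integrable_sq {v : ℝ≥0} (hv : v ≠ 0) :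
    Integrable (fun x : ℝ => x ^ 2) (gaussianReal 0 v) := by
  have hvp : 0 < (v:ℝ) := by exact_mod_cast pos_iff_ne_zero.2 hv
  rw [gauss_integrable_iff hv]
  simp_rw [gauss_pdf_mul v (fun x => x ^ 2)]
  have h := integrable_rpow_mul_exp_neg_mul_sq (b := (2 * (v:ℝ))⁻¹) (by positivity) (s := 2)
    (by norm_num)
  simp_rw [rpow_two_eq] at h
  exact h.const_mul _

lemma gauss_moment1 {v : ℝ≥0} (hv : v ≠ 0) :
    ∫ x, x ∂(gaussianReal 0 v) = 0 := by
  rw [gauss_integral_eq hv]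
  simp_rw [gauss_pdf_mul v (fun x => x)]
  rw [integral_const_mul, int_odd_exp, mul_zero]

lemma gauss_integrable_id {v : ℝ≥0} (hv : v ≠ 0) :
    Integrable (fun x : ℝ => x) (gaussianReal 0 v) := by
  have hvp : 0 < (v:ℝ) := by exact_mod_cast pos_iff_ne_zero.2 hv
  rw [gauss_integrable_iff hv]
  simp_rw [gauss_pdf_mul v (fun x => x)]
  exact (integrable_mul_exp_neg_mul_sq (by positivity)).const_mul _

end OPPEAux

open OPPEAux

/-- Scalar Gaussian denoising: the estimator `X̂₀ = Y/√(1+σ²)` has the same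
distribution as `X` (standard Gaussian), and its MSE equals
`2(1 − 1/√(1+σ²))`, which is strictly smaller than twice the MMSE `2σ²/(1+σ²)`. -/
theorem optimal_perfect_perception_estimator
    {Ω : Type*} [MeasurableSpace Ω] (μ : Measure Ω) [IsProbabilityMeasure μ]
    (X N : Ω → ℝ) (hX : Measurable X) (hN : Measurable N)
    (hindep : IndepFun X N μ) (σ : ℝ) (hσ : 0 < σ)
    (hXd : Measure.map X μ = gaussianReal 0 1)
    (hNd : Measure.map N μ = gaussianReal 0 (σ ^ 2).toNNReal) :
    Measure.map (fun ω => (X ω + N ω) / Real.sqrt (1 + σ ^ 2)) μ = gaussianReal 0 1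
    ∧ ∫ ω, (X ω - (X ω + N ω) / Real.sqrt (1 + σ ^ 2)) ^ 2 ∂μ
        = 2 * (1 - 1 / Real.sqrt (1 + σ ^ 2))
    ∧ 2 * (1 - 1 / Real.sqrt (1 + σ ^ 2)) < 2 * (σ ^ 2 / (1 + σ ^ 2)) := by
  set w : ℝ≥0 := (σ ^ 2).toNNReal with hw
  have hwne : w ≠ 0 := by
    simp only [hw, ne_eq, Real.toNNReal_eq_zero, not_le]
    positivity
  have hwcoe : (w : ℝ) = σ ^ 2 := Real.coe_toNNReal _ (by positivity)
  set s : ℝ := Real.sqrt (1 + σ ^ 2) with hsdef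
  have hs0 : 0 < s := Real.sqrt_pos.2 (by positivity)
  have hs2 : s ^ 2 = 1 + σ ^ 2 := Real.sq_sqrt (by positivity)
  have hs1 : 1 < s := by nlinarith [hσ]
  have hsne : s ≠ 0 := ne_of_gt hs0
  -- part 1
  have hsum : Measure.map (fun ω => X ω + N ω) μ = gaussianReal 0 (1 + w) := by
    have hpair : Measure.map (fun ω => (X ω, N ω)) μ = (Measure.map X μ).prod (Measure.map N μ) :=
      (ProbabilityTheory.indepFun_iff_map_prod_eq_prod_map_map
        hX.aemeasurable hN.aemeasurable).1 hindep
    have hcomp : (fun ω => X ω + N ω)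
        = (fun p : ℝ × ℝ => p.1 + p.2) ∘ (fun ω => (X ω, N ω)) := rfl
    rw [hcomp, ← Measure.map_map measurable_add (hX.prodMk hN), hpair, hXd, hNd,
      gauss_map_add one_ne_zero hwne]
  have part1 : Measure.map (fun ω => (X ω + N ω) / s) μ = gaussianReal 0 1 := by
    have hcomp : (fun ω => (X ω + N ω) / s) = (fun y : ℝ => s⁻¹ * y) ∘ (fun ω => X ω + N ω) := by
      funext ω; simp [div_eq_inv_mul]
    rw [hcomp, ← Measure.map_map (measurable_const_mul _) (show Measurable (fun ω => X ω + N ω) from hX.add hN), hsum,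
      ProbabilityTheory.gaussianReal_map_const_mul, mul_zero]
    congr 1
    rw [← NNReal.coe_inj, NNReal.coe_mul, NNReal.coe_one]
    push_cast [hwcoe]
    rw [inv_pow, hs2]
    exact inv_mul_cancel₀ (by positivity)
  -- moments
  have hsmsq : AEStronglyMeasurable (fun x : ℝ => x ^ 2) (gaussianReal 0 1) :=
    (continuous_pow 2).measurable.aestronglyMeasurable
  have hIX2 : ∫ ω, X ω ^ 2 ∂μ = 1 := by
    have h2 : ∫ ω, X ω ^ 2 ∂μ = ∫ y, y ^ 2 ∂(gaussianReal 0 1) := by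
      rw [← hXd]
      exact (integral_map hX.aemeasurable
        ((continuous_pow 2).measurable.aestronglyMeasurable)).symm
    rw [h2]
    simpa using gauss_moment2 one_ne_zero
  have hIN2 : ∫ ω, N ω ^ 2 ∂μ = σ ^ 2 := by
    have h2 : ∫ ω, N ω ^ 2 ∂μ = ∫ y, y ^ 2 ∂(gaussianReal 0 w) := by
      rw [← hNd]
      exact (integral_map hN.aemeasurable
        ((continuous_pow 2).measurable.aestronglyMeasurable)).symm
    rw [h2, gauss_moment2 hwne, hwcoe]
  have hIX1 : ∫ ω, X ω ∂μ = 0 := by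
    have h2 : ∫ ω, X ω ∂μ = ∫ y, y ∂(gaussianReal 0 1) := by
      rw [← hXd]
      exact (integral_map hX.aemeasurable (measurable_id' : Measurable fun x : ℝ => x).aestronglyMeasurable).symm
    rw [h2, gauss_moment1 one_ne_zero]
  have hiX2 : Integrable (fun ω => X ω ^ 2) μ := by
    have h2 : Integrable ((fun x : ℝ => x ^ 2) ∘ X) μ := by
      rw [← integrable_map_measure ((continuous_pow 2).measurable.aestronglyMeasurable)
        hX.aemeasurable, hXd]
      exact gauss_integrable_sq one_ne_zero
    exact h2
  have hiN2 : Integrable (fun ω => N ω ^ 2) μ := by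
    have h2 : Integrable ((fun x : ℝ => x ^ 2) ∘ N) μ := by
      rw [← integrable_map_measure ((continuous_pow 2).measurable.aestronglyMeasurable)
        hN.aemeasurable, hNd]
      exact gauss_integrable_sq hwne
    exact h2
  have hiX1 : Integrable X μ := by
    have h2 : Integrable ((fun x : ℝ => x) ∘ X) μ := by
      rw [← integrable_map_measure (measurable_id' : Measurable fun x : ℝ => x).aestronglyMeasurable hX.aemeasurable, hXd]
      exact gauss_integrable_id one_ne_zero
    exact h2
  have hiN1 : Integrable N μ := by
    have h2 : Integrable ((fun x : ℝ => x) ∘ N) μ := by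
      rw [← integrable_map_measure (measurable_id' : Measurable fun x : ℝ => x).aestronglyMeasurable hN.aemeasurable, hNd]
      exact gauss_integrable_id hwne
    exact h2
  have hiXN : Integrable (fun ω => X ω * N ω) μ := hindep.integrable_mul hiX1 hiN1
  have hIXN : ∫ ω, X ω * N ω ∂μ = 0 := by
    rw [hindep.integral_fun_mul_eq_mul_integral hiX1.1 hiN1.1, hIX1, zero_mul]
  -- part 2
  have part2 : ∫ ω, (X ω - (X ω + N ω) / s) ^ 2 ∂μ = 2 * (1 - 1 / s) := by
    have hpt : ∀ ω, (X ω - (X ω + N ω) / s) ^ 2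
        = (1 - 1/s)^2 * X ω ^ 2 + (1/s)^2 * N ω ^ 2
          - (2 * (1 - 1/s) * (1/s)) * (X ω * N ω) := by
      intro ω
      field_simp
      ring
    rw [integral_congr_ae (Filter.Eventually.of_forall hpt),
      integral_sub (f := fun ω => (1 - 1/s)^2 * X ω ^ 2 + (1/s)^2 * N ω ^ 2)
        (g := fun ω => (2 * (1 - 1/s) * (1/s)) * (X ω * N ω))
        ((hiX2.const_mul _).add (hiN2.const_mul _)) (hiXN.const_mul _),
      integral_add (f := fun ω => (1 - 1/s)^2 * X ω ^ 2)
        (g := fun ω => (1/s)^2 * N ω ^ 2) (hiX2.const_mul _) (hiN2.const_mul _),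
      integral_const_mul, integral_const_mul, integral_const_mul, hIX2, hIN2, hIXN]
    rw [mul_zero, sub_zero, mul_one]
    have hσs : σ ^ 2 = s ^ 2 - 1 := by linarith
    rw [hσs]
    field_simp
    ring
  refine ⟨part1, part2, ?_⟩
  have hfrac : σ ^ 2 / (1 + σ ^ 2) = (s ^ 2 - 1) / s ^ 2 := by
    rw [← hs2, show σ ^ 2 = s ^ 2 - 1 from by linarith]
  rw [hfrac]
  have e : (s ^ 2 - 1) / s ^ 2 - (1 - 1/s) = (s - 1) / s ^ 2 := by
    field_simp
    ring
  have hp : 0 < (s - 1) / s ^ 2 := div_pos (by linarith) (by positivity)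
  linarith
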